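/- Let R = ℂ[a₁,b₁,c₁,d₁,a₂,b₂,c₂,d₂]/(a₁d₁−b₁c₁−1, a₂d₂−b₂c₂−1) with the 𝔾ₘ-action of weight +1 on b₁,b₂, weight −1 on c₁,c₂, and weight 0 on a₁,d₁,a₂,d₂. Then the ring of invariants R₀ (elements of weight 0) is generated by a₁, d₁, a₂, d₂, b₁c₂, b₂c₁, and the only relation among these generators is (b₁c₂)(b₂c₁) = (a₁d₁−1)(a₂d₂−1). -/

import Mathlib

open MvPolynomial

namespace Stmt1

/-- Variables: `0 ↦ a₁, 1 ↦ b₁, 2 ↦ c₁, 3 ↦ d₁, 4 ↦ a₂, 5 ↦ b₂, 6 ↦ c₂, 7 ↦ d₂`. -/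
noncomputable def relIdeal : Ideal (MvPolynomial (Fin 8) ℂ) :=
  Ideal.span {X 0 * X 3 - X 1 * X 2 - 1, X 4 * X 7 - X 5 * X 6 - 1}

/-- The coordinate ring `R` of pairs of `SL₂` matrices. -/
noncomputable abbrev R := MvPolynomial (Fin 8) ℂ ⧸ relIdeal

/-- The `𝔾ₘ`-weights: `+1` on `b₁,b₂`, `−1` on `c₁,c₂`, `0` on `a₁,d₁,a₂,d₂`. -/
def wt : Fin 8 → ℤ := ![0, 1, -1, 0, 0, 1, -1, 0]

noncomputable def π : MvPolynomial (Fin 8) ℂ →ₐ[ℂ] R := Ideal.Quotient.mkₐ ℂ relIdeal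

/-- The six generators `a₁, d₁, a₂, d₂, b₁c₂, b₂c₁` of the invariant ring. -/
noncomputable def gens : Fin 6 → R :=
  ![π (X 0), π (X 3), π (X 4), π (X 7), π (X 1 * X 6), π (X 5 * X 2)]


-- auxiliary
abbrev B4 := MvPolynomial (Fin 4) ℂ
abbrev S := LaurentPolynomial B4
noncomputable def LC : B4 →+* S := LaurentPolynomial.C
noncomputable abbrev LT : ℤ → S := LaurentPolynomial.T
noncomputable def g1 : B4 := X 0 * X 1 - 1
noncomputable def g2 : B4 := X 2 * X 3 - 1

noncomputable def ψv : Fin 8 → S :=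
  ![LC (X 0), LT 1, LC g1 * LT (-1), LC (X 1), LC (X 2), 1, LC g2, LC (X 3)]

noncomputable def ψ0 : MvPolynomial (Fin 8) ℂ →ₐ[ℂ] S := aeval ψv

lemma hψ0 : ∀ a ∈ relIdeal, ψ0 a = 0 := by
  intro a ha
  have h : relIdeal ≤ RingHom.ker ψ0 := by
    rw [relIdeal, Ideal.span_le]
    rintro p (rfl | rfl) <;>
      simp only [SetLike.mem_coe, RingHom.mem_ker, ψ0, map_sub, map_mul, map_one, aeval_X, ψv]
    · show LC (X 0) * LC (X 1) - LT 1 * (LC g1 * LT (-1)) - 1 = 0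
      rw [mul_comm (LT 1), mul_assoc, ← LaurentPolynomial.T_add]
      norm_num [← map_mul]
      rw [← map_one LC, ← map_sub, ← map_sub,
        show (X 0 * X 1 - g1 - 1 : B4) = 0 by rw [g1]; ring, map_zero]
    · show LC (X 2) * LC (X 3) - 1 * LC g2 - 1 = 0
      rw [one_mul, ← map_mul, ← map_one LC, ← map_sub, ← map_sub,
        show (X 2 * X 3 - g2 - 1 : B4) = 0 by rw [g2]; ring, map_zero]
  exact h ha

noncomputable def ψb : R →ₐ[ℂ] S := Ideal.Quotient.liftₐ relIdeal ψ0 hψ0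

lemma ψb_π (p : MvPolynomial (Fin 8) ℂ) : ψb (π p) = ψ0 p := by
  show (ψb.comp π) p = ψ0 p
  rw [ψb, π, Ideal.Quotient.liftₐ_comp]

end Stmt1
namespace Stmt1
noncomputable def vS : Fin 6 → S :=
  ![LC (X 0), LC (X 1), LC (X 2), LC (X 3), LC g2 * LT 1, LC g1 * LT (-1)]
noncomputable def φ : MvPolynomial (Fin 6) ℂ →ₐ[ℂ] S := aeval vS

lemma φ_eq : φ = ψb.comp (aeval gens) := by
  apply MvPolynomial.algHom_ext
  intro i
  rw [AlgHom.comp_apply, aeval_X, φ, aeval_X]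
  fin_cases i
  · show LC (X 0) = ψb (π (X 0)); rw [ψb_π, ψ0, aeval_X]; rfl
  · show LC (X 1) = ψb (π (X 3)); rw [ψb_π, ψ0, aeval_X]; rfl
  · show LC (X 2) = ψb (π (X 4)); rw [ψb_π, ψ0, aeval_X]; rfl
  · show LC (X 3) = ψb (π (X 7)); rw [ψb_π, ψ0, aeval_X]; rfl
  · show LC g2 * LT 1 = ψb (π (X 1 * X 6))
    rw [ψb_π, ψ0, map_mul, aeval_X, aeval_X]
    exact mul_comm _ _
  · show LC g1 * LT (-1) = ψb (π (X 5 * X 2))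
    rw [ψb_π, ψ0, map_mul, aeval_X, aeval_X]
    exact (one_mul _).symm
end Stmt1
namespace Stmt1
lemma algC (c : ℂ) : algebraMap ℂ S c = LC (MvPolynomial.C c) := by
  rw [IsScalarTower.algebraMap_apply ℂ B4 S]; rfl

noncomputable def res (m : Fin 6 →₀ ℕ) : Fin 4 →₀ ℕ :=
  Finsupp.equivFunOnFinite.symm ![m 0, m 1, m 2, m 3]

@[simp] lemma res_apply (m : Fin 6 →₀ ℕ) (i : Fin 4) :
    res m i = ![m 0, m 1, m 2, m 3] i := rfl

lemma monomial_res (m : Fin 6 →₀ ℕ) (c : ℂ) :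
    (monomial (res m) c : B4) =
      C c * (X 0 ^ m 0 * X 1 ^ m 1 * X 2 ^ m 2 * X 3 ^ m 3) := by
  rw [monomial_eq, Finsupp.prod_fintype _ _ (fun i => pow_zero _), Fin.prod_univ_four]
  norm_num [mul_assoc]
  left; rfl

lemma φ_monomial (m : Fin 6 →₀ ℕ) (c : ℂ) :
    φ (monomial m c) = AddMonoidAlgebra.single ((m 4 : ℤ) - m 5)
      (monomial (res m) c * g2 ^ m 4 * g1 ^ m 5) := by
  have h1 : φ (monomial m c) = algebraMap ℂ S c *
      (LC (X 0) ^ m 0 * LC (X 1) ^ m 1 * LC (X 2) ^ m 2 * LC (X 3) ^ m 3 *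
       (LC g2 * LT 1) ^ m 4 * (LC g1 * LT (-1)) ^ m 5) := by
    rw [φ, aeval_monomial, Finsupp.prod_fintype _ _ (fun i => pow_zero _), Fin.prod_univ_six]
    rfl
  rw [h1, algC, monomial_res, LaurentPolynomial.single_eq_C_mul_T]
  show _ = LC _ * _
  simp only [map_mul, map_pow, LaurentPolynomial.T_sub, mul_pow, LaurentPolynomial.T_pow,
    mul_one, mul_neg_one]
  ring
end Stmt1
namespace Stmt1
noncomputable def f6 : MvPolynomial (Fin 6) ℂ :=
  X 4 * X 5 - (X 0 * X 1 - 1) * (X 2 * X 3 - 1)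

def good (p : MvPolynomial (Fin 6) ℂ) : Prop :=
  ∀ m ∈ p.support, m 4 = 0 ∨ m 5 = 0

lemma good_add {p q} (hp : good p) (hq : good q) : good (p + q) := by
  intro m hm
  rcases Finset.mem_union.mp (Finsupp.support_add hm) with h | h
  · exact hp m h
  · exact hq m h

lemma good_neg {p} (hp : good p) : good (-p) := by
  intro m hm
  rw [MvPolynomial.support_neg] at hm
  exact hp m hm

lemma good_monomial (m : Fin 6 →₀ ℕ) (c : ℂ) (h : m 4 = 0 ∨ m 5 = 0) :
    good (monomial m c) := by
  intro m' hm'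
  rcases Finset.mem_singleton.mp (MvPolynomial.support_monomial_subset hm') with rfl
  exact h

def divProp (p : MvPolynomial (Fin 6) ℂ) : Prop :=
  ∃ q r, p = q * f6 + r ∧ good r

lemma divProp_add {p q} (hp : divProp p) (hq : divProp q) : divProp (p + q) := by
  obtain ⟨a, r, rfl, hr⟩ := hp
  obtain ⟨b, s, rfl, hs⟩ := hq
  exact ⟨a + b, r + s, by ring, good_add hr hs⟩

lemma divProp_neg {p} (hp : divProp p) : divProp (-p) := by
  obtain ⟨a, r, rfl, hr⟩ := hp
  exact ⟨-a, -r, by ring, good_neg hr⟩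

lemma divProp_sub {p q} (hp : divProp p) (hq : divProp q) : divProp (p - q) := by
  rw [sub_eq_add_neg]; exact divProp_add hp (divProp_neg hq)

lemma divProp_monomial : ∀ n (m : Fin 6 →₀ ℕ), m 4 ≤ n → ∀ c, divProp (monomial m c) := by
  intro n
  induction n with
  | zero =>
    intro m hm c
    exact ⟨0, monomial m c, by ring, good_monomial _ _ (Or.inl (Nat.le_zero.mp hm))⟩
  | succ n ih =>
    intro m hm c
    by_cases h5 : m 5 = 0
    · exact ⟨0, monomial m c, by ring, good_monomial _ _ (Or.inr h5)⟩
    by_cases h4 : m 4 = 0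
    · exact ⟨0, monomial m c, by ring, good_monomial _ _ (Or.inl h4)⟩
    have h4' : 1 ≤ m 4 := Nat.one_le_iff_ne_zero.mpr h4
    have h5' : 1 ≤ m 5 := Nat.one_le_iff_ne_zero.mpr h5
    set m' : Fin 6 →₀ ℕ := m - Finsupp.single 4 1 - Finsupp.single 5 1 with hm'
    have key : m' + Finsupp.single 4 1 + Finsupp.single 5 1 = m := by
      ext i
      simp only [hm', Finsupp.add_apply, Finsupp.tsub_apply, Finsupp.single_apply]
      by_cases hi4 : (4 : Fin 6) = i
      · subst hi4; simp; omega
      by_cases hi5 : (5 : Fin 6) = i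
      · subst hi5; simp; omega
      simp [if_neg hi4, if_neg hi5]
    have hm'4 : m' 4 = m 4 - 1 := by
      simp [hm', Finsupp.tsub_apply, Finsupp.single_apply]
    have hm'5 : m' 5 = m 5 - 1 := by
      simp [hm', Finsupp.tsub_apply, Finsupp.single_apply]
    have hX : ∀ (u : Fin 6 →₀ ℕ) (j : Fin 6),
        (monomial u c : MvPolynomial (Fin 6) ℂ) * X j = monomial (u + Finsupp.single j 1) c := by
      intro u j
      rw [show (X j : MvPolynomial (Fin 6) ℂ) = monomial (Finsupp.single j 1) 1 by
        rw [← X_pow_eq_monomial, pow_one], monomial_mul, mul_one]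
    have hsplit : monomial m c = monomial m' c * (X 4 * X 5) := by
      rw [← mul_assoc, hX, hX, key]
    have pA : (monomial m' c : MvPolynomial (Fin 6) ℂ) * X 0 * X 1 * X 2 * X 3 =
        monomial (m' + Finsupp.single 0 1 + Finsupp.single 1 1 + Finsupp.single 2 1
          + Finsupp.single 3 1) c := by rw [hX, hX, hX, hX]
    have pB : (monomial m' c : MvPolynomial (Fin 6) ℂ) * X 0 * X 1 =
        monomial (m' + Finsupp.single 0 1 + Finsupp.single 1 1) c := by rw [hX, hX]
    have pC : (monomial m' c : MvPolynomial (Fin 6) ℂ) * X 2 * X 3 =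
        monomial (m' + Finsupp.single 2 1 + Finsupp.single 3 1) c := by rw [hX, hX]
    have hexp : monomial m c = monomial m' c * f6 +
        (monomial (m' + Finsupp.single 0 1 + Finsupp.single 1 1 + Finsupp.single 2 1
            + Finsupp.single 3 1) c
          - monomial (m' + Finsupp.single 0 1 + Finsupp.single 1 1) c
          - monomial (m' + Finsupp.single 2 1 + Finsupp.single 3 1) c + monomial m' c) := by
      rw [hsplit, f6, ← pA, ← pB, ← pC]; ring
    rw [hexp]
    have e4 : ∀ (u : Fin 6 →₀ ℕ), u 4 = m 4 - 1 → u 4 ≤ n := fun u hu => by omega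
    have s4 : ∀ (u : Fin 6 →₀ ℕ) (j : Fin 6), j ≠ 4 →
        (u + Finsupp.single j 1 : Fin 6 →₀ ℕ) 4 = u 4 := by
      intro u j hj
      rw [Finsupp.add_apply, Finsupp.single_apply, if_neg hj, add_zero]
    apply divProp_add ⟨monomial m' c, 0, by ring, by intro x hx; simp at hx⟩
    apply divProp_add (divProp_sub (divProp_sub ?_ ?_) ?_) (ih _ (e4 _ hm'4) _)
    · refine ih _ (e4 _ ?_) _
      rw [s4 _ _ (by decide), s4 _ _ (by decide), s4 _ _ (by decide), s4 _ _ (by decide), hm'4]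
    · refine ih _ (e4 _ ?_) _
      rw [s4 _ _ (by decide), s4 _ _ (by decide), hm'4]
    · refine ih _ (e4 _ ?_) _
      rw [s4 _ _ (by decide), s4 _ _ (by decide), hm'4]
end Stmt1
namespace Stmt1
lemma divProp_all (p : MvPolynomial (Fin 6) ℂ) : divProp p := by
  induction p using MvPolynomial.induction_on' with
  | monomial m c => exact divProp_monomial (m 4) m le_rfl c
  | add p q hp hq => exact divProp_add hp hq

lemma g1_ne : (g1 : B4) ≠ 0 := fun h => by
  have := congrArg (eval (fun _ => (0:ℂ))) h
  simp [g1] at this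

lemma g2_ne : (g2 : B4) ≠ 0 := fun h => by
  have := congrArg (eval (fun _ => (0:ℂ))) h
  simp [g2] at this

lemma aeval_f6 : aeval gens f6 = 0 := by
  have h : aeval gens f6 =
      π ((X 1 * X 6) * (X 5 * X 2) - (X 0 * X 3 - 1) * (X 4 * X 7 - 1)) := by
    simp only [f6, map_sub, map_mul, map_one, aeval_X]
    rfl
  rw [h, π, Ideal.Quotient.mkₐ_eq_mk, Ideal.Quotient.eq_zero_iff_mem, relIdeal]
  rw [show ({X 0 * X 3 - X 1 * X 2 - 1, X 4 * X 7 - X 5 * X 6 - 1} : Set (MvPolynomial (Fin 8) ℂ))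
    = {X 0 * X 3 - X 1 * X 2 - 1, X 4 * X 7 - X 5 * X 6 - 1} from rfl]
  rw [Ideal.mem_span_pair]
  exact ⟨-(X 4 * X 7 - 1), -(X 1 * X 2), by ring⟩
end Stmt1
namespace Stmt1
lemma good_zero (r : MvPolynomial (Fin 6) ℂ) (hg : good r) (h : φ r = 0) : r = 0 := by
  classical
  by_contra hr
  obtain ⟨m₀, hm₀⟩ := MvPolynomial.support_nonempty.mpr hr
  set k : (Fin 6 →₀ ℕ) → ℤ := fun m => (m 4 : ℤ) - m 5 with hk
  have hφr : φ r = ∑ m ∈ r.support, AddMonoidAlgebra.single (k m)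
      (monomial (res m) (coeff m r) * g2 ^ m 4 * g1 ^ m 5) := by
    conv_lhs => rw [← support_sum_monomial_coeff r]
    rw [map_sum]
    exact Finset.sum_congr rfl fun m _ => φ_monomial m _
  rw [hφr] at h
  have h0 := congrArg (fun s : S => s.coeff (k m₀)) h
  simp only [AddMonoidAlgebra.coeff_sum, AddMonoidAlgebra.coeff_single, AddMonoidAlgebra.coeff_zero,
    Finsupp.finset_sum_apply, Finsupp.single_apply, Finsupp.coe_zero,
    Pi.zero_apply] at h0
  rw [← Finset.sum_filter] at h0
  set Tset := r.support.filter (fun m => k m = k m₀) with hT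
  have hm₀f : m₀ ∈ Tset := Finset.mem_filter.mpr ⟨hm₀, rfl⟩
  have hfix : ∀ m ∈ Tset, m 4 = m₀ 4 ∧ m 5 = m₀ 5 := by
    intro m hm
    obtain ⟨hms, hkm⟩ := Finset.mem_filter.mp hm
    have h1 := hg m hms
    have h2 := hg m₀ hm₀
    simp only [hk] at hkm
    rcases h1 with h1 | h1 <;> rcases h2 with h2 | h2 <;>
      constructor <;> omega
  have h0' : (∑ m ∈ Tset, monomial (res m) (coeff m r)) * g2 ^ m₀ 4 * g1 ^ m₀ 5 = 0 := by
    rw [Finset.sum_mul, Finset.sum_mul, ← h0]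
    exact Finset.sum_congr rfl fun m hm => by rw [(hfix m hm).1, (hfix m hm).2]
  have hP : (∑ m ∈ Tset, monomial (res m) (coeff m r)) = 0 := by
    rcases mul_eq_zero.mp h0' with h' | h'
    · rcases mul_eq_zero.mp h' with h'' | h''
      · exact h''
      · exact absurd h'' (pow_ne_zero _ g2_ne)
    · exact absurd h' (pow_ne_zero _ g1_ne)
  have hsum : (∑ m ∈ Tset, coeff (res m₀) (monomial (res m) (coeff m r))) = coeff m₀ r := by
    rw [Finset.sum_eq_single_of_mem m₀ hm₀f ?uniq, coeff_monomial, if_pos rfl]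
    case uniq =>
      intro m hm hne
      rw [coeff_monomial, if_neg ?_]
      intro hres
      apply hne
      ext i
      fin_cases i
      · exact congrArg (fun u : Fin 4 →₀ ℕ => u 0) hres
      · exact congrArg (fun u : Fin 4 →₀ ℕ => u 1) hres
      · exact congrArg (fun u : Fin 4 →₀ ℕ => u 2) hres
      · exact congrArg (fun u : Fin 4 →₀ ℕ => u 3) hres
      · exact (hfix m hm).1.trans (hfix m₀ hm₀f).1.symm
      · exact (hfix m hm).2.trans (hfix m₀ hm₀f).2.symm
  have hc := congrArg (coeff (res m₀)) hP
  rw [MvPolynomial.coeff_sum, hsum, coeff_zero] at hc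
  exact mem_support_iff.mp hm₀ hc
end Stmt1
namespace Stmt1
lemma ker_eq : RingHom.ker (MvPolynomial.aeval gens : MvPolynomial (Fin 6) ℂ →ₐ[ℂ] R) =
    Ideal.span {f6} := by
  apply le_antisymm
  · intro p hp
    rw [RingHom.mem_ker] at hp
    obtain ⟨q, r, rfl, hgood⟩ := divProp_all p
    have hr : aeval gens r = 0 := by
      have : aeval gens (q * f6) = 0 := by rw [map_mul, aeval_f6, mul_zero]
      rw [map_add, this, zero_add] at hp
      exact hp
    have hφr : φ r = 0 := by
      rw [φ_eq, AlgHom.comp_apply, hr, map_zero]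
    rw [good_zero r hgood hφr, add_zero]
    exact Ideal.mem_span_singleton.mpr ⟨q, mul_comm q f6⟩
  · rw [Ideal.span_le]
    intro p hp
    rw [Set.mem_singleton_iff.mp hp]
    exact RingHom.mem_ker.mpr aeval_f6
end Stmt1
namespace Stmt1
noncomputable abbrev adjoinS : Subalgebra ℂ R := Algebra.adjoin ℂ (Set.range gens)

lemma weight_eq (m : Fin 8 →₀ ℕ) :
    Finsupp.weight wt m = (m 1 : ℤ) + m 5 - m 2 - m 6 := by
  rw [Finsupp.weight_apply, Finsupp.sum_fintype _ _ (fun i => zero_smul ℕ (wt i)),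
    Fin.sum_univ_eight]
  simp only [show wt 0 = 0 from rfl, show wt 1 = 1 from rfl, show wt 2 = -1 from rfl,
    show wt 3 = 0 from rfl, show wt 4 = 0 from rfl, show wt 5 = 1 from rfl,
    show wt 6 = -1 from rfl, show wt 7 = 0 from rfl, nsmul_eq_mul]
  push_cast
  ring

lemma gen_mem (i : Fin 6) : gens i ∈ adjoinS :=
  Algebra.subset_adjoin ⟨i, rfl⟩

lemma pi_eq_of_sub_mem {p q : MvPolynomial (Fin 8) ℂ} (h : p - q ∈ relIdeal) : π p = π q := by
  rw [π, Ideal.Quotient.mkₐ_eq_mk, Ideal.Quotient.eq]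
  exact h

lemma b1c1_mem : π (X 1 * X 2) ∈ adjoinS := by
  have h : π (X 1 * X 2) = π (X 0) * π (X 3) - 1 := by
    rw [← map_mul, show (1 : R) = π 1 from (map_one π).symm, ← map_sub]
    apply pi_eq_of_sub_mem
    rw [relIdeal, Ideal.mem_span_pair]
    exact ⟨-1, 0, by ring⟩
  rw [h]
  exact sub_mem (mul_mem (gen_mem 0) (gen_mem 1)) (one_mem _)

lemma b2c2_mem : π (X 5 * X 6) ∈ adjoinS := by
  have h : π (X 5 * X 6) = π (X 4) * π (X 7) - 1 := by
    rw [← map_mul, show (1 : R) = π 1 from (map_one π).symm, ← map_sub]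
    apply pi_eq_of_sub_mem
    rw [relIdeal, Ideal.mem_span_pair]
    exact ⟨0, -1, by ring⟩
  rw [h]
  exact sub_mem (mul_mem (gen_mem 2) (gen_mem 3)) (one_mem _)

lemma b1c2_mem : π (X 1 * X 6) ∈ adjoinS := gen_mem 4
lemma b2c1_mem : π (X 5 * X 2) ∈ adjoinS := gen_mem 5
end Stmt1
namespace Stmt1
lemma hX8 (u : Fin 8 →₀ ℕ) (j : Fin 8) :
    (monomial u 1 : MvPolynomial (Fin 8) ℂ) * X j = monomial (u + Finsupp.single j 1) 1 := by
  rw [show (X j : MvPolynomial (Fin 8) ℂ) = monomial (Finsupp.single j 1) 1 by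
    rw [← X_pow_eq_monomial, pow_one], monomial_mul, mul_one]

lemma msplit {m : Fin 8 →₀ ℕ} {i j : Fin 8} (hij : i ≠ j) (hi : 1 ≤ m i) (hj : 1 ≤ m j) :
    ∃ m' : Fin 8 →₀ ℕ, m' + Finsupp.single i 1 + Finsupp.single j 1 = m ∧
      m' i = m i - 1 ∧ m' j = m j - 1 ∧ ∀ l, l ≠ i → l ≠ j → m' l = m l := by
  refine ⟨m - Finsupp.single i 1 - Finsupp.single j 1, ?_, ?_, ?_, ?_⟩
  · ext l
    simp only [Finsupp.add_apply, Finsupp.tsub_apply, Finsupp.single_apply]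
    by_cases hil : i = l
    · subst hil
      rw [if_pos rfl, if_neg (fun h => hij h.symm)]
      omega
    by_cases hjl : j = l
    · subst hjl
      rw [if_neg hil, if_pos rfl]
      omega
    · rw [if_neg hil, if_neg hjl]
      omega
  · simp [Finsupp.tsub_apply, Finsupp.single_apply, Ne.symm hij]
  · simp [Finsupp.tsub_apply, Finsupp.single_apply, hij]
  · intro l hli hlj
    simp [Finsupp.tsub_apply, Finsupp.single_apply, Ne.symm hli, Ne.symm hlj]

lemma pair_mem (i j : Fin 8)
    (hp : (i, j) = (1, 6) ∨ (i, j) = (5, 2) ∨ (i, j) = (1, 2) ∨ (i, j) = (5, 6)) :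
    π (X i * X j) ∈ adjoinS := by
  rcases hp with h | h | h | h <;> rw [Prod.ext_iff] at h <;>
    obtain ⟨rfl, rfl⟩ := h
  · exact b1c2_mem
  · exact b2c1_mem
  · exact b1c1_mem
  · exact b2c2_mem

lemma mono_mem : ∀ n (m : Fin 8 →₀ ℕ), m 1 + m 2 + m 5 + m 6 ≤ n →
    (m 1 + m 5 = m 2 + m 6) → π (monomial m 1) ∈ adjoinS := by
  intro n
  induction n with
  | zero =>
    intro m hm hw
    have h1 : m 1 = 0 := by omega
    have h2 : m 2 = 0 := by omega
    have h5 : m 5 = 0 := by omega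
    have h6 : m 6 = 0 := by omega
    rw [← prod_X_pow_eq_monomial, map_prod]
    apply Subalgebra.prod_mem
    intro i hi
    have hne : m i ≠ 0 := Finsupp.mem_support_iff.mp hi
    rw [map_pow]
    apply pow_mem
    fin_cases i
    · exact gen_mem 0
    · exact absurd h1 hne
    · exact absurd h2 hne
    · exact gen_mem 1
    · exact gen_mem 2
    · exact absurd h5 hne
    · exact absurd h6 hne
    · exact gen_mem 3
  | succ n ih =>
    intro m hm hw
    by_cases hz : m 1 + m 2 + m 5 + m 6 = 0
    · exact ih m (by omega) hw
    -- pick a pair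
    have hpick : ∃ i j : Fin 8, i ≠ j ∧ 1 ≤ m i ∧ 1 ≤ m j ∧
        ((i, j) = (1, 6) ∨ (i, j) = (5, 2) ∨ (i, j) = (1, 2) ∨ (i, j) = (5, 6)) ∧
        (i = 1 ∨ i = 5) ∧ (j = 2 ∨ j = 6) := by
      by_cases h1 : 1 ≤ m 1
      · by_cases h6 : 1 ≤ m 6
        · exact ⟨1, 6, by decide, h1, h6, by simp, by simp, by simp⟩
        · exact ⟨1, 2, by decide, h1, by omega, by simp, by simp, by simp⟩
      · have h5 : 1 ≤ m 5 := by omega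
        by_cases h2 : 1 ≤ m 2
        · exact ⟨5, 2, by decide, h5, h2, by simp, by simp, by simp⟩
        · exact ⟨5, 6, by decide, h5, by omega, by simp, by simp, by simp⟩
    obtain ⟨i, j, hij, hi, hj, hpair, hi15, hj26⟩ := hpick
    obtain ⟨m', hkey, hmi, hmj, hother⟩ := msplit hij hi hj
    have hsplit : monomial m (1 : ℂ) = monomial m' 1 * (X i * X j) := by
      rw [← mul_assoc, hX8, hX8, hkey]
    rw [hsplit, map_mul]
    have hmem := pair_mem i j hpair
    rcases hi15 with rfl | rfl <;> rcases hj26 with rfl | rfl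
    · have e5 := hother 5 (by decide) (by decide)
      have e6 := hother 6 (by decide) (by decide)
      exact mul_mem (ih m' (by omega) (by omega)) hmem
    · have e2 := hother 2 (by decide) (by decide)
      have e5 := hother 5 (by decide) (by decide)
      exact mul_mem (ih m' (by omega) (by omega)) hmem
    · have e1 := hother 1 (by decide) (by decide)
      have e6 := hother 6 (by decide) (by decide)
      exact mul_mem (ih m' (by omega) (by omega)) hmem
    · have e1 := hother 1 (by decide) (by decide)
      have e2 := hother 2 (by decide) (by decide)
      exact mul_mem (ih m' (by omega) (by omega)) hmem
end Stmt1
namespace Stmt1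
lemma part1 : Submodule.map π.toLinearMap (weightedHomogeneousSubmodule ℂ wt 0) =
    Subalgebra.toSubmodule adjoinS := by
  apply le_antisymm
  · rintro x ⟨p, hp, rfl⟩
    have hp' : IsWeightedHomogeneous wt p 0 := hp
    show π p ∈ adjoinS
    rw [← support_sum_monomial_coeff p, map_sum]
    apply Subalgebra.sum_mem
    intro m hm
    have hw := hp' (mem_support_iff.mp hm)
    rw [weight_eq] at hw
    have hw' : m 1 + m 5 = m 2 + m 6 := by omega
    have hmono : (monomial m (coeff m p) : MvPolynomial (Fin 8) ℂ) =
        coeff m p • monomial m 1 := by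
      rw [smul_monomial, smul_eq_mul, mul_one]
    rw [hmono, map_smul]
    exact adjoinS.smul_mem (mono_mem _ m le_rfl hw') _
  · intro x hx
    rw [Subalgebra.mem_toSubmodule] at hx
    induction hx using Algebra.adjoin_induction with
    | mem x hxg =>
      obtain ⟨i, rfl⟩ := hxg
      fin_cases i
      · exact ⟨X 0, isWeightedHomogeneous_X ℂ wt 0, rfl⟩
      · exact ⟨X 3, isWeightedHomogeneous_X ℂ wt 3, rfl⟩
      · exact ⟨X 4, isWeightedHomogeneous_X ℂ wt 4, rfl⟩
      · exact ⟨X 7, isWeightedHomogeneous_X ℂ wt 7, rfl⟩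
      · refine ⟨X 1 * X 6, ?_, rfl⟩
        have h := (isWeightedHomogeneous_X ℂ wt 1).mul (isWeightedHomogeneous_X ℂ wt 6)
        rwa [show wt 1 + wt 6 = 0 by decide] at h
      · refine ⟨X 5 * X 2, ?_, rfl⟩
        have h := (isWeightedHomogeneous_X ℂ wt 5).mul (isWeightedHomogeneous_X ℂ wt 2)
        rwa [show wt 5 + wt 2 = 0 by decide] at h
    | algebraMap r => exact ⟨C r, isWeightedHomogeneous_C wt r, π.commutes r⟩
    | add x y hx hy ihx ihy => exact Submodule.add_mem _ ihx ihy
    | mul x y hx hy ihx ihy =>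
      obtain ⟨p, hp, rfl⟩ := ihx
      obtain ⟨q, hq, rfl⟩ := ihy
      have hp' : IsWeightedHomogeneous wt p 0 := hp
      have hq' : IsWeightedHomogeneous wt q 0 := hq
      refine ⟨p * q, ?_, map_mul π p q⟩
      have hpq : IsWeightedHomogeneous wt (p * q) 0 := by simpa using hp'.mul hq'
      exact hpq

/-- The invariant ring `R₀` (weight-zero part of `R`) is generated by
`a₁, d₁, a₂, d₂, b₁c₂, b₂c₁`, and the only relation among these generators is
`(b₁c₂)(b₂c₁) = (a₁d₁−1)(a₂d₂−1)`. -/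
theorem stmt_1 :
    Submodule.map π.toLinearMap (weightedHomogeneousSubmodule ℂ wt 0) =
      Subalgebra.toSubmodule (Algebra.adjoin ℂ (Set.range gens)) ∧
    RingHom.ker (MvPolynomial.aeval gens : MvPolynomial (Fin 6) ℂ →ₐ[ℂ] R) =
      Ideal.span {(X 4 * X 5 - (X 0 * X 1 - 1) * (X 2 * X 3 - 1) :
        MvPolynomial (Fin 6) ℂ)} := by
  exact ⟨part1, ker_eq⟩

end Stmt1
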